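/- Let G be an interval graph and S, S' distinct c-colorable sets of size at least k, both locked in G[S ∪ S'] but neither locked in G. If there exists a vertex v ∉ S ∪ S' such that both S + v and S' + v are c-colorable in G, then the TAR(k)-distance between S and S' is |S △ S'| + 2; otherwise it is |S △ S'| + 4. -/

import Mathlib

set_option linter.unusedSectionVars false


open Finset

variable {V : Type*}

/-- `S` is a `c`-colorable vertex set in `G`. -/
def ColSet (G : SimpleGraph V) (c : ℕ) (S : Finset V) : Prop :=
  (G.induce (S : Set V)).Colorable c

/-- One TAR(k) step between `c`-colorable sets. -/
def TARStep (G : SimpleGraph V) (c k : ℕ) [DecidableEq V] (A B : Finset V) : Prop :=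
  ColSet G c A ∧ ColSet G c B ∧ k ≤ A.card ∧ k ≤ B.card ∧ (symmDiff A B).card = 1

/-- One TJ step between `c`-colorable sets. -/
def TJStep (G : SimpleGraph V) (c : ℕ) [DecidableEq V] (A B : Finset V) : Prop :=
  ColSet G c A ∧ ColSet G c B ∧ (A \ B).card = 1 ∧ (B \ A).card = 1

/-- `l` is a TAR(k)-reconfiguration sequence from `S` to `S'`. -/
def TARSeq (G : SimpleGraph V) (c k : ℕ) [DecidableEq V] (S S' : Finset V)
    (l : List (Finset V)) : Prop :=
  l.head? = some S ∧ l.getLast? = some S' ∧ l.Chain' (TARStep G c k)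

def TJSeq (G : SimpleGraph V) (c : ℕ) [DecidableEq V] (S S' : Finset V)
    (l : List (Finset V)) : Prop :=
  l.head? = some S ∧ l.getLast? = some S' ∧ l.Chain' (TJStep G c)

def TARReach (G : SimpleGraph V) (c k : ℕ) [DecidableEq V] (S S' : Finset V) : Prop :=
  ∃ l, TARSeq G c k S S' l

def TJReach (G : SimpleGraph V) (c : ℕ) [DecidableEq V] (S S' : Finset V) : Prop :=
  ∃ l, TJSeq G c S S' l

/-- Length of a shortest TAR(k)-sequence (number of steps), `⊤` if none exists. -/
noncomputable def TARDist (G : SimpleGraph V) (c k : ℕ) [DecidableEq V]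
    (S S' : Finset V) : ℕ∞ :=
  sInf {n : ℕ∞ | ∃ l, TARSeq G c k S S' l ∧ (l.length : ℕ∞) = n + 1}

noncomputable def TJDist (G : SimpleGraph V) (c : ℕ) [DecidableEq V]
    (S S' : Finset V) : ℕ∞ :=
  sInf {n : ℕ∞ | ∃ l, TJSeq G c S S' l ∧ (l.length : ℕ∞) = n + 1}

/-- `S` is a maximal `c`-colorable set among subsets of `U`, of size exactly `k`
(`S` is "locked" in `G[U]`). -/
def LockedIn (G : SimpleGraph V) (c k : ℕ) (U S : Finset V) : Prop :=
  S.card = k ∧ ColSet G c S ∧ S ⊆ U ∧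
    ∀ T ⊆ U, ColSet G c T → S ⊆ T → T = S

/-- `S` is locked in `G` itself. -/
def Locked [Fintype V] (G : SimpleGraph V) (c k : ℕ) (S : Finset V) : Prop :=
  LockedIn G c k Finset.univ S

/-- `G` is an interval graph. -/
def IsIntervalGraph (G : SimpleGraph V) : Prop :=
  ∃ l r : V → ℝ, (∀ v, l v ≤ r v) ∧
    ∀ u v, G.Adj u v ↔ u ≠ v ∧ max (l u) (l v) ≤ min (r u) (r v)

/-- `G` is perfect: every induced subgraph has chromatic number equal to its
clique number, stated via the colorability/clique-free characterization. -/
def IsPerfect (G : SimpleGraph V) : Prop :=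
  ∀ (S : Set V) (c : ℕ), (G.induce S).Colorable c ↔ (G.induce S).CliqueFree (c + 1)
-- === auxiliary lemmas (to be placed above the main theorem) ===
section AuxLemmas
variable [DecidableEq V]

lemma colSet_mono {G : SimpleGraph V} {c : ℕ} {X Y : Finset V} (hYX : Y ⊆ X)
    (hX : ColSet G c X) : ColSet G c Y := by
  obtain ⟨C⟩ := hX
  exact ⟨SimpleGraph.Coloring.mk (fun y => C ⟨y.1, hYX y.2⟩) (fun {a b} hab => C.valid hab)⟩

noncomputable def cov (l r : V → ℝ) (X : Finset V) (p : ℝ) : ℕ :=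
  (X.filter (fun u => l u ≤ p ∧ p ≤ r u)).card

lemma cov_mono {l r : V → ℝ} {X Y : Finset V} (h : X ⊆ Y) (p : ℝ) :
    cov l r X p ≤ cov l r Y p :=
  Finset.card_le_card (Finset.filter_subset_filter _ h)

lemma cov_le_of_colorable {G : SimpleGraph V} {l r : V → ℝ}
    (hrep : ∀ u v, G.Adj u v ↔ u ≠ v ∧ max (l u) (l v) ≤ min (r u) (r v))
    {c : ℕ} {X : Finset V} (hX : ColSet G c X) (p : ℝ) : cov l r X p ≤ c := by
  by_contra h
  push_neg at h
  obtain ⟨C⟩ := hX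
  set F := X.filter (fun u => l u ≤ p ∧ p ≤ r u) with hF
  have hmap : ∀ x ∈ F.attach, (C ⟨x.1, (Finset.mem_filter.mp x.2).1⟩) ∈ (Finset.univ : Finset (Fin c)) :=
    fun _ _ => Finset.mem_univ _
  have hcard : (Finset.univ : Finset (Fin c)).card < F.attach.card := by
    simpa [Finset.card_attach, cov] using h
  obtain ⟨x, -, y, -, hxy, heq⟩ := Finset.exists_ne_map_eq_of_card_lt_of_maps_to hcard hmap
  have hx := Finset.mem_filter.mp x.2
  have hy := Finset.mem_filter.mp y.2
  have hne : x.1 ≠ y.1 := fun hv => hxy (Subtype.ext hv)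
  have hadj : G.Adj x.1 y.1 := by
    rw [hrep]
    exact ⟨hne, le_trans (max_le (le_trans hx.2.1 (le_refl p)) hy.2.1) (le_min hx.2.2 hy.2.2) |>.trans_eq rfl⟩
  exact C.valid (by exact hadj :
    (G.induce (X : Set V)).Adj ⟨x.1, hx.1⟩ ⟨y.1, hy.1⟩) heq

lemma colorable_of_cov_le {G : SimpleGraph V} {l r : V → ℝ}
    (hlr : ∀ v, l v ≤ r v)
    (hrep : ∀ u v, G.Adj u v ↔ u ≠ v ∧ max (l u) (l v) ≤ min (r u) (r v))
    {c : ℕ} (X : Finset V) (hcov : ∀ p, cov l r X p ≤ c) : ColSet G c X := by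
  classical
  induction X using Finset.strongInduction with
  | _ X ih =>
  rcases X.eq_empty_or_nonempty with rfl | hne
  · exact ⟨SimpleGraph.Coloring.mk
      (fun x => absurd x.2 (by simp)) (fun {a b} _ => absurd a.2 (by simp))⟩
  · obtain ⟨u, hu, hmax⟩ := X.exists_max_image l hne
    set Y := X.erase u with hY
    have hYss : Y ⊂ X := Finset.erase_ssubset hu
    obtain ⟨CY⟩ := ih Y hYss (fun p => le_trans (cov_mono hYss.subset p) (hcov p))
    have hc1 : 1 ≤ c := by
      have : 0 < cov l r X (l u) := Finset.card_pos.mpr ⟨u, Finset.mem_filter.mpr ⟨hu, le_refl _, hlr u⟩⟩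
      exact lt_of_lt_of_le this (hcov (l u))
    set N := Y.filter (fun w => G.Adj u w) with hN
    have hNcov : ∀ w ∈ N, l w ≤ l u ∧ l u ≤ r w := by
      intro w hw
      obtain ⟨hwY, hadj⟩ := Finset.mem_filter.mp hw
      have h2 := (hrep u w).mp hadj
      exact ⟨hmax w (Finset.mem_of_mem_erase hwY),
        le_trans (le_max_left _ _) (le_trans h2.2 (min_le_right _ _))⟩
    have hNcard : N.card + 1 ≤ c := by
      have hsub : insert u N ⊆ X.filter (fun w => l w ≤ l u ∧ l u ≤ r w) := by
        intro x hx
        rcases Finset.mem_insert.mp hx with rfl | hx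
        · exact Finset.mem_filter.mpr ⟨hu, le_refl _, hlr x⟩
        · exact Finset.mem_filter.mpr ⟨Finset.mem_of_mem_erase (Finset.mem_filter.mp hx).1, hNcov x hx⟩
      have hunotN : u ∉ N := fun h => (Finset.mem_erase.mp (Finset.mem_filter.mp h).1).1 rfl
      calc N.card + 1 = (insert u N).card := (Finset.card_insert_of_notMem hunotN).symm
        _ ≤ (X.filter (fun w => l w ≤ l u ∧ l u ≤ r w)).card := Finset.card_le_card hsub
        _ ≤ c := hcov (l u)
    set K := N.attach.image (fun w => CY ⟨w.1, by
      have := w.2; exact Finset.mem_coe.mpr (Finset.mem_filter.mp this).1⟩) with hK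
    have hKcard : K.card < c := by
      calc K.card ≤ N.attach.card := Finset.card_image_le
        _ = N.card := Finset.card_attach
        _ < c := by omega
    have : ∃ f : Fin c, f ∉ K := by
      by_contra hall
      push_neg at hall
      have : (Finset.univ : Finset (Fin c)) ⊆ K := fun f _ => hall f
      have := Finset.card_le_card this
      simp only [Finset.card_univ, Fintype.card_fin] at this
      omega
    obtain ⟨f, hf⟩ := this
    refine ⟨SimpleGraph.Coloring.mk
      (fun x => if h : x.1 = u then f else CY ⟨x.1, by
        have hx : x.1 ∈ X := x.2
        exact Finset.mem_coe.mpr (Finset.mem_erase.mpr ⟨h, hx⟩)⟩) ?_⟩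
    intro a b hab
    have hadj : G.Adj a.1 b.1 := hab
    have hmemK : ∀ (x : ↥(X : Set V)) (hxu : x.1 ≠ u), G.Adj u x.1 →
        CY ⟨x.1, Finset.mem_coe.mpr (Finset.mem_erase.mpr ⟨hxu, x.2⟩)⟩ ∈ K := by
      intro x hxu hadjx
      have hxN : x.1 ∈ N := Finset.mem_filter.mpr ⟨Finset.mem_erase.mpr ⟨hxu, x.2⟩, hadjx⟩
      exact Finset.mem_image.mpr ⟨⟨x.1, hxN⟩, Finset.mem_attach _ _, rfl⟩
    by_cases hau : a.1 = u <;> by_cases hbu : b.1 = u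
    · exact absurd (hau ▸ hbu ▸ hadj) (G.irrefl)
    · simp only [dif_pos hau, dif_neg hbu]
      intro hEq
      exact hf (hEq ▸ hmemK b hbu (hau ▸ hadj))
    · simp only [dif_pos hbu, dif_neg hau]
      intro hEq
      exact hf (hEq.symm ▸ hmemK a hau (hbu ▸ hadj.symm))
    · simp only [dif_neg hau, dif_neg hbu]
      exact CY.valid (by exact hadj)

lemma exchange {l r : V → ℝ} {c : ℕ} {A B : Finset V}
    (hA : ∀ p, cov l r A p ≤ c) (hB : ∀ p, cov l r B p ≤ c)
    {b : V} (hb : b ∈ B \ A) (hmin : ∀ x ∈ A \ B, r b ≤ r x)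
    (hABne : (A \ B).Nonempty) :
    ∃ a ∈ A \ B, ∀ p, cov l r (insert b (A.erase a)) p ≤ c := by
  obtain ⟨a, ha, hla⟩ := (A \ B).exists_min_image l hABne
  have hbB : b ∈ B := (Finset.mem_sdiff.mp hb).1
  have hbA : b ∉ A := (Finset.mem_sdiff.mp hb).2
  have haA : a ∈ A := (Finset.mem_sdiff.mp ha).1
  refine ⟨a, ha, fun p => ?_⟩
  by_cases hpb : l b ≤ p ∧ p ≤ r b
  · have hbne : b ∉ A.erase a := fun h => hbA (Finset.mem_of_mem_erase h)
    have hins : cov l r (insert b (A.erase a)) p = cov l r (A.erase a) p + 1 := by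
      unfold cov
      rw [Finset.filter_insert, if_pos hpb, Finset.card_insert_of_notMem]
      intro h
      exact hbne (Finset.mem_of_mem_filter _ h)
    rw [hins]
    rcases lt_or_eq_of_le (hA p) with hlt | hfull
    · have h3 := cov_mono (l := l) (r := r) (Finset.erase_subset a A) p
      omega
    · have hconf : ∃ a' ∈ A \ B, l a' ≤ p ∧ p ≤ r a' := by
        by_contra hno
        push_neg at hno
        have hsub : A.filter (fun u => l u ≤ p ∧ p ≤ r u) ⊆
            (B.filter (fun u => l u ≤ p ∧ p ≤ r u)).erase b := by
          intro x hx
          obtain ⟨hxA, hxc⟩ := Finset.mem_filter.mp hx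
          have hxB : x ∈ B := by
            by_contra hxB
            exact absurd hxc.2 (not_le.mpr (hno x (Finset.mem_sdiff.mpr ⟨hxA, hxB⟩) hxc.1))
          refine Finset.mem_erase.mpr ⟨fun h => hbA (h ▸ hxA), Finset.mem_filter.mpr ⟨hxB, hxc⟩⟩
        have hbmem : b ∈ B.filter (fun u => l u ≤ p ∧ p ≤ r u) := Finset.mem_filter.mpr ⟨hbB, hpb⟩
        have h1 := Finset.card_le_card hsub
        rw [Finset.card_erase_of_mem hbmem] at h1
        have h2 := hB p
        have h3 := Finset.card_pos.mpr ⟨b, hbmem⟩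
        unfold cov at hfull h2
        omega
      obtain ⟨a', ha', hla', hra'⟩ := hconf
      have hacov : l a ≤ p ∧ p ≤ r a := ⟨le_trans (hla a' ha') hla', le_trans hpb.2 (hmin a ha)⟩
      have hamem : a ∈ A.filter (fun u => l u ≤ p ∧ p ≤ r u) := Finset.mem_filter.mpr ⟨haA, hacov⟩
      have herase : cov l r (A.erase a) p = cov l r A p - 1 := by
        unfold cov
        rw [Finset.filter_erase, Finset.card_erase_of_mem hamem]
      rw [herase, ← hfull]
      have : 0 < cov l r A p := Finset.card_pos.mpr ⟨a, hamem⟩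
      omega
  · have : cov l r (insert b (A.erase a)) p = cov l r (A.erase a) p := by
      unfold cov
      rw [Finset.filter_insert, if_neg hpb]
    rw [this]
    exact le_trans (cov_mono (Finset.erase_subset a A) p) (hA p)

lemma sd_insert {X : Finset V} {b : V} (hb : b ∉ X) : symmDiff X (insert b X) = {b} := by
  ext x
  simp only [Finset.mem_symmDiff, Finset.mem_insert, Finset.mem_singleton]
  constructor
  · rintro (⟨hx, h⟩ | ⟨(rfl | hx), hnx⟩) <;> tauto
  · rintro rfl; tauto

lemma sd_erase {X : Finset V} {a : V} (ha : a ∈ X) : symmDiff X (X.erase a) = {a} := by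
  ext x
  simp only [Finset.mem_symmDiff, Finset.mem_erase, Finset.mem_singleton]
  constructor
  · rintro (⟨hx, h⟩ | ⟨⟨hne, hx⟩, hnx⟩) <;> tauto
  · rintro rfl; tauto

lemma sd_exchange {A B : Finset V} {a m : V} (ha : a ∈ A \ B) (hm : m ∈ B \ A) :
    symmDiff (insert m (A.erase a)) B = ((symmDiff A B).erase a).erase m := by
  obtain ⟨haA, haB⟩ := Finset.mem_sdiff.mp ha
  obtain ⟨hmB, hmA⟩ := Finset.mem_sdiff.mp hm
  ext x
  simp only [Finset.mem_symmDiff, Finset.mem_erase, Finset.mem_insert]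
  constructor
  · rintro (⟨(rfl | ⟨hne, hx⟩), hnB⟩ | ⟨hxB, hnx⟩)
    · exact absurd hmB hnB
    · have hxm : x ≠ m := fun h => hmA (h ▸ hx)
      tauto
    · have hxm : x ≠ m := fun h => hnx (Or.inl h)
      have hxa : x ≠ a := fun h => haB (h ▸ hxB)
      have hxA : x ∉ A := fun h => hnx (Or.inr ⟨hxa, h⟩)
      tauto
  · rintro ⟨hxm, hxa, (⟨hxA, hxB⟩ | ⟨hxB, hxA⟩)⟩
    · exact Or.inl ⟨Or.inr ⟨hxa, hxA⟩, hxB⟩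
    · exact Or.inr ⟨hxB, by tauto⟩

lemma sdiff_nonempty_of_card_eq {A B : Finset V} (hcard : A.card = B.card)
    {m : V} (hm : m ∈ B \ A) : (A \ B).Nonempty := by
  rw [Finset.sdiff_nonempty]
  intro hAB
  have hA : A = B := Finset.eq_of_subset_of_card_le hAB (le_of_eq hcard.symm)
  rw [Finset.mem_sdiff, hA] at hm
  exact hm.2 hm.1

lemma path_lemma {G : SimpleGraph V} {l r : V → ℝ} {c k : ℕ}
    (hlr : ∀ v, l v ≤ r v)
    (hrep : ∀ u v, G.Adj u v ↔ u ≠ v ∧ max (l u) (l v) ≤ min (r u) (r v)) :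
    ∀ n (A B : Finset V), (symmDiff A B).card = n → A.card = B.card → k < A.card →
    (∀ p, cov l r A p ≤ c) → (∀ p, cov l r B p ≤ c) →
    ∃ L : List (Finset V), L.head? = some A ∧ L.getLast? = some B ∧
      L.length = n + 1 ∧ L.Chain' (TARStep G c k) := by
  intro n
  induction n using Nat.strong_induction_on with
  | _ n ih =>
  intro A B hsd hcard hk hcovA hcovB
  rcases Nat.eq_zero_or_pos n with rfl | hn
  · have hAB : A = B := by
      rw [Finset.card_eq_zero] at hsd; rwa [← Finset.bot_eq_empty, symmDiff_eq_bot] at hsd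
    exact ⟨[A], rfl, by simp [hAB], rfl, List.isChain_singleton _⟩
  · obtain ⟨m, hmsd, hmin'⟩ := (symmDiff A B).exists_min_image r (Finset.card_pos.mp (hsd ▸ hn))
    rcases Finset.mem_symmDiff.mp hmsd with ⟨hmA, hmB⟩ | ⟨hmB, hmA⟩
    · have hmAB : m ∈ A \ B := Finset.mem_sdiff.mpr ⟨hmA, hmB⟩
      have hBAne : (B \ A).Nonempty := sdiff_nonempty_of_card_eq hcard.symm hmAB
      obtain ⟨β, hβ, hcovB'⟩ := exchange hcovB hcovA hmAB
        (fun x hx => hmin' x (Finset.mem_symmDiff.mpr (by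
          rcases Finset.mem_sdiff.mp hx with ⟨h1, h2⟩; exact Or.inr ⟨h1, h2⟩))) hBAne
      obtain ⟨hβB, hβA⟩ := Finset.mem_sdiff.mp hβ
      set B' := insert m (B.erase β) with hB'
      have hmer : m ∉ B.erase β := fun h => hmB (Finset.mem_of_mem_erase h)
      have hcardB' : B'.card = B.card := by
        rw [hB', Finset.card_insert_of_notMem hmer, Finset.card_erase_of_mem hβB]
        have : 0 < B.card := Finset.card_pos.mpr ⟨β, hβB⟩
        omega
      have hsdB' : symmDiff A B' = ((symmDiff A B).erase β).erase m := by
        rw [symmDiff_comm, sd_exchange hβ hmAB, symmDiff_comm]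
      have hβsd : β ∈ symmDiff A B := Finset.mem_symmDiff.mpr (Or.inr ⟨hβB, hβA⟩)
      have hmmem : m ∈ (symmDiff A B).erase β :=
        Finset.mem_erase.mpr ⟨fun h => hβA (h ▸ hmA), hmsd⟩
      have hcard' : (symmDiff A B').card = n - 2 := by
        rw [hsdB', Finset.card_erase_of_mem hmmem, Finset.card_erase_of_mem hβsd, hsd]; omega
      have hn2 : 2 ≤ n := by
        have h1 : ({m, β} : Finset V) ⊆ symmDiff A B := by
          intro x hx
          rcases Finset.mem_insert.mp hx with rfl | hx
          · exact hmsd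
          · exact (Finset.mem_singleton.mp hx) ▸ hβsd
        have h2 := Finset.card_le_card h1
        rw [Finset.card_insert_of_notMem (fun h => hmB (by rw [Finset.mem_singleton.mp h]; exact hβB)),
          Finset.card_singleton, hsd] at h2
        exact h2
      obtain ⟨L', hh', hg', hlen', hch'⟩ := ih (n - 2) (by omega) A B' (by omega)
        (by omega) hk hcovA hcovB'
      have hcolB' : ColSet G c B' := colorable_of_cov_le hlr hrep _ hcovB'
      have hcolBe : ColSet G c (B.erase β) := colorable_of_cov_le hlr hrep _
        (fun p => le_trans (cov_mono (Finset.erase_subset β B) p) (hcovB p))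
      have hcolB : ColSet G c B := colorable_of_cov_le hlr hrep _ hcovB
      have hcardBe : (B.erase β).card = B.card - 1 := Finset.card_erase_of_mem hβB
      have hkB : k < B.card := hcard ▸ hk
      have step1 : TARStep G c k B' (B.erase β) := by
        refine ⟨hcolB', hcolBe, by omega, by omega, ?_⟩
        rw [symmDiff_comm, sd_insert hmer]
        exact Finset.card_singleton m
      have step2 : TARStep G c k (B.erase β) B := by
        refine ⟨hcolBe, hcolB, by omega, by omega, ?_⟩
        rw [symmDiff_comm, sd_erase hβB]
        exact Finset.card_singleton β
      cases L' with
      | nil => simp at hh'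
      | cons hd tl =>
        have hhd : hd = A := by simpa using hh'
        refine ⟨(hd :: tl) ++ [B.erase β, B], by simpa using hhd, ?_, ?_, ?_⟩
        · rw [List.getLast?_append]; rfl
        · simp at hlen' ⊢; omega
        · unfold List.Chain'; rw [List.isChain_append]
          refine ⟨hch', ?_, ?_⟩
          · exact List.isChain_cons.mpr ⟨fun y hy => by simp at hy; subst hy; exact step2,
              List.isChain_singleton _⟩
          · intro x hx y hy
            rw [hg'] at hx
            simp at hx hy
            subst hx; subst hy
            exact step1
    · have hmBA : m ∈ B \ A := Finset.mem_sdiff.mpr ⟨hmB, hmA⟩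
      have hABne : (A \ B).Nonempty := sdiff_nonempty_of_card_eq hcard hmBA
      obtain ⟨a, ha, hcovA'⟩ := exchange hcovA hcovB hmBA
        (fun x hx => hmin' x (Finset.mem_symmDiff.mpr (by
          rcases Finset.mem_sdiff.mp hx with ⟨h1, h2⟩; exact Or.inl ⟨h1, h2⟩))) hABne
      obtain ⟨haA, haB⟩ := Finset.mem_sdiff.mp ha
      set A' := insert m (A.erase a) with hA'
      have hmer : m ∉ A.erase a := fun h => hmA (Finset.mem_of_mem_erase h)
      have hcardA' : A'.card = A.card := by
        rw [hA', Finset.card_insert_of_notMem hmer, Finset.card_erase_of_mem haA]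
        have : 0 < A.card := Finset.card_pos.mpr ⟨a, haA⟩
        omega
      have hsdA' : symmDiff A' B = ((symmDiff A B).erase a).erase m := sd_exchange ha hmBA
      have hasd : a ∈ symmDiff A B := Finset.mem_symmDiff.mpr (Or.inl ⟨haA, haB⟩)
      have hmmem : m ∈ (symmDiff A B).erase a :=
        Finset.mem_erase.mpr ⟨fun h => haB (h ▸ hmB), hmsd⟩
      have hcard' : (symmDiff A' B).card = n - 2 := by
        rw [hsdA', Finset.card_erase_of_mem hmmem, Finset.card_erase_of_mem hasd, hsd]; omega
      have hn2 : 2 ≤ n := by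
        have h1 : ({m, a} : Finset V) ⊆ symmDiff A B := by
          intro x hx
          rcases Finset.mem_insert.mp hx with rfl | hx
          · exact hmsd
          · exact (Finset.mem_singleton.mp hx) ▸ hasd
        have h2 := Finset.card_le_card h1
        rw [Finset.card_insert_of_notMem (fun h => hmA (by rw [Finset.mem_singleton.mp h]; exact haA)),
          Finset.card_singleton, hsd] at h2
        exact h2
      obtain ⟨L', hh', hg', hlen', hch'⟩ := ih (n - 2) (by omega) A' B (by omega)
        (by rw [hcardA']; exact hcard) (by rw [hcardA']; exact hk) hcovA' hcovB
      have hcolA' : ColSet G c A' := colorable_of_cov_le hlr hrep _ hcovA'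
      have hcolAe : ColSet G c (A.erase a) := colorable_of_cov_le hlr hrep _
        (fun p => le_trans (cov_mono (Finset.erase_subset a A) p) (hcovA p))
      have hcolA : ColSet G c A := colorable_of_cov_le hlr hrep _ hcovA
      have hcardAe : (A.erase a).card = A.card - 1 := Finset.card_erase_of_mem haA
      have step1 : TARStep G c k A (A.erase a) := by
        refine ⟨hcolA, hcolAe, by omega, by omega, ?_⟩
        rw [sd_erase haA]
        exact Finset.card_singleton a
      have step2 : TARStep G c k (A.erase a) A' := by
        refine ⟨hcolAe, hcolA', by omega, by omega, ?_⟩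
        rw [sd_insert hmer]
        exact Finset.card_singleton m
      cases L' with
      | nil => simp at hh'
      | cons hd tl =>
        have hhd : hd = A' := by simpa using hh'
        subst hhd
        refine ⟨A :: (A.erase a) :: A' :: tl, rfl, ?_, ?_, ?_⟩
        · simpa using hg'
        · simp at hlen' ⊢; omega
        · refine List.isChain_cons.mpr ⟨fun y hy => by simp at hy; subst hy; exact step1,
            List.isChain_cons.mpr ⟨fun y hy => by simp at hy; subst hy; exact step2, hch'⟩⟩

lemma tarStep_symm {G : SimpleGraph V} {c k : ℕ} {A B : Finset V}
    (h : TARStep G c k A B) : TARStep G c k B A :=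
  ⟨h.2.1, h.1, h.2.2.2.1, h.2.2.1, by rw [symmDiff_comm]; exact h.2.2.2.2⟩

lemma sd_card_parity (A B : Finset V) :
    (symmDiff A B).card + 2 * (A ∩ B).card = A.card + B.card := by
  have h1 : (symmDiff A B).card = (A \ B).card + (B \ A).card := by
    rw [symmDiff_def, Finset.sup_eq_union]
    exact Finset.card_union_of_disjoint disjoint_sdiff_sdiff
  have h2 := Finset.card_sdiff_add_card_inter A B
  have h3 := Finset.card_sdiff_add_card_inter B A
  rw [Finset.inter_comm B A] at h3
  omega

lemma sd_triangle (A B C : Finset V) :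
    (symmDiff A C).card ≤ (symmDiff A B).card + (symmDiff B C).card := by
  calc (symmDiff A C).card ≤ (symmDiff A B ∪ symmDiff B C).card :=
        Finset.card_le_card (symmDiff_triangle A B C)
    _ ≤ _ := Finset.card_union_le _ _

lemma chainbound {G : SimpleGraph V} {c k : ℕ} :
    ∀ (L : List (Finset V)), L.Chain' (TARStep G c k) →
    ∀ A B, L.head? = some A → L.getLast? = some B →
    (symmDiff A B).card ≤ L.length - 1 ∧ (symmDiff A B).card % 2 = (L.length - 1) % 2 := by
  intro L
  induction L with
  | nil => intro _ A B hA; simp at hA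
  | cons hd tl ih =>
    intro hch A B hA hB
    have hhd : hd = A := by simpa using hA
    subst hhd
    cases tl with
    | nil =>
      have hB' : hd = B := by simpa using hB
      subst hB'
      simp [symmDiff_self]
    | cons hd2 tl2 =>
      unfold List.Chain' at hch; rw [List.isChain_cons_cons] at hch
      have hB2 : (hd2 :: tl2).getLast? = some B := by
        rw [List.getLast?_cons_cons] at hB; exact hB
      obtain ⟨h1, h2⟩ := ih hch.2 hd2 B rfl hB2
      have hstep : (symmDiff hd hd2).card = 1 := hch.1.2.2.2.2
      have htri := sd_triangle hd hd2 B
      have htri2 := sd_triangle hd2 hd B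
      rw [symmDiff_comm hd2 hd] at htri2
      have hpar : (symmDiff hd B).card % 2 ≠ (symmDiff hd2 B).card % 2 := by
        have p1 := sd_card_parity hd B
        have p2 := sd_card_parity hd2 B
        have p3 := sd_card_parity hd hd2
        omega
      constructor
      · simp only [List.length_cons] at *
        omega
      · simp only [List.length_cons] at *
        omega

lemma step_structure {A B : Finset V} (h : (symmDiff A B).card = 1) :
    ∃ x, (x ∉ A ∧ B = insert x A) ∨ (x ∈ A ∧ B = A.erase x) := by
  obtain ⟨x, hx⟩ := Finset.card_eq_one.mp h
  refine ⟨x, ?_⟩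
  have hmem : ∀ y, y ∈ symmDiff A B ↔ y = x := by
    intro y; rw [hx, Finset.mem_singleton]
  by_cases hxA : x ∈ A
  · right
    refine ⟨hxA, ?_⟩
    ext y
    rw [Finset.mem_erase]
    constructor
    · intro hyB
      have hyx : y ≠ x := by
        rintro rfl
        have := (hmem y).mpr rfl
        rw [Finset.mem_symmDiff] at this
        rcases this with ⟨_, h2⟩ | ⟨_, h2⟩
        · exact h2 hyB
        · exact h2 hxA
      have : y ∈ A := by
        by_contra hyA
        exact hyx ((hmem y).mp (Finset.mem_symmDiff.mpr (Or.inr ⟨hyB, hyA⟩)))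
      exact ⟨hyx, this⟩
    · rintro ⟨hyx, hyA⟩
      by_contra hyB
      exact hyx ((hmem y).mp (Finset.mem_symmDiff.mpr (Or.inl ⟨hyA, hyB⟩)))
  · left
    refine ⟨hxA, ?_⟩
    have hxB : x ∈ B := by
      have := (hmem x).mpr rfl
      rw [Finset.mem_symmDiff] at this
      rcases this with ⟨h1, _⟩ | ⟨h1, _⟩
      · exact absurd h1 hxA
      · exact h1
    ext y
    rw [Finset.mem_insert]
    constructor
    · intro hyB
      by_cases hyx : y = x
      · exact Or.inl hyx
      · right
        by_contra hyA
        exact hyx ((hmem y).mp (Finset.mem_symmDiff.mpr (Or.inr ⟨hyB, hyA⟩)))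
    · rintro (rfl | hyA)
      · exact hxB
      · by_contra hyB
        have hyx := (hmem y).mp (Finset.mem_symmDiff.mpr (Or.inl ⟨hyA, hyB⟩))
        subst hyx
        exact hxA hyA

lemma front_step {R : Finset V → Finset V → Prop} {L : List (Finset V)} {A B : Finset V}
    (hch : L.Chain' R) (hA : L.head? = some A) (hB : L.getLast? = some B)
    (hlen : 2 ≤ L.length) :
    ∃ T L2, L = A :: L2 ∧ L2.head? = some T ∧ L2.getLast? = some B ∧
      L2.length = L.length - 1 ∧ R A T ∧ L2.Chain' R := by
  cases L with
  | nil => simp at hA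
  | cons hd tl =>
    have hhd : hd = A := by simpa using hA
    subst hhd
    cases tl with
    | nil => simp at hlen
    | cons hd2 tl2 =>
      unfold List.Chain' at hch; rw [List.isChain_cons_cons] at hch
      refine ⟨hd2, hd2 :: tl2, rfl, rfl, ?_, by simp, hch.1, hch.2⟩
      rw [List.getLast?_cons_cons] at hB
      exact hB

lemma sd_insert_both {S S' : Finset V} {v : V} (hv : v ∉ S) (hv' : v ∉ S') :
    symmDiff (insert v S) (insert v S') = symmDiff S S' := by
  ext x
  simp only [Finset.mem_symmDiff, Finset.mem_insert]
  by_cases hx : x = v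
  · subst hx; simp [hv, hv']
  · tauto

lemma sd_insert_left {S S' : Finset V} {x : V} (hx : x ∉ S) (hx' : x ∉ S') :
    symmDiff (insert x S) S' = insert x (symmDiff S S') := by
  ext y
  simp only [Finset.mem_symmDiff, Finset.mem_insert]
  by_cases hy : y = x
  · subst hy; tauto
  · tauto

lemma sd_insert_insert {X Y : Finset V} {x y : V} (hxX : x ∉ X) (hxY : x ∉ Y)
    (hyX : y ∉ X) (hyY : y ∉ Y) (hxy : x ≠ y) :
    symmDiff (insert x X) (insert y Y) = insert x (insert y (symmDiff X Y)) := by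
  ext z
  simp only [Finset.mem_symmDiff, Finset.mem_insert]
  by_cases hzx : z = x
  · subst hzx; simp [hxy]; tauto
  · by_cases hzy : z = y
    · subst hzy; simp [Ne.symm hxy]; tauto
    · tauto

lemma sd_subset_union (S S' : Finset V) : symmDiff S S' ⊆ S ∪ S' := by
  intro x hx
  rw [Finset.mem_symmDiff] at hx
  rw [Finset.mem_union]
  tauto

end AuxLemmas


theorem interval_dist_two_locked {V : Type*} [Fintype V] [DecidableEq V]
    (G : SimpleGraph V) (hG : IsIntervalGraph G) (c k : ℕ) (S S' : Finset V)
    (hne : S ≠ S') (hS : ColSet G c S) (hS' : ColSet G c S')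
    (hk : k ≤ S.card) (hk' : k ≤ S'.card)
    (hnlG : ¬ Locked G c k S) (hnlG' : ¬ Locked G c k S')
    (hl : LockedIn G c k (S ∪ S') S) (hl' : LockedIn G c k (S ∪ S') S') :
    ((∃ v ∉ S ∪ S', ColSet G c (insert v S) ∧ ColSet G c (insert v S')) →
        TARDist G c k S S' = ((symmDiff S S').card : ℕ∞) + 2) ∧
    ((¬ ∃ v ∉ S ∪ S', ColSet G c (insert v S) ∧ ColSet G c (insert v S')) →
        TARDist G c k S S' = ((symmDiff S S').card : ℕ∞) + 4) := by
  classical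
  obtain ⟨l, r, hlr, hrep⟩ := hG
  have hcS : S.card = k := hl.1
  have hcS' : S'.card = k := hl'.1
  set d := (symmDiff S S').card with hd
  have hd1 : 1 ≤ d := by
    rcases Nat.eq_zero_or_pos d with h0 | h
    · exfalso
      rw [hd, Finset.card_eq_zero, ← Finset.bot_eq_empty, symmDiff_eq_bot] at h0
      exact hne h0
    · exact h
  have hk1 : 1 ≤ k := by
    rcases Nat.eq_zero_or_pos k with rfl | h
    · exfalso
      apply hne
      rw [Finset.card_eq_zero.mp hcS, Finset.card_eq_zero.mp hcS']
    · exact h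
  -- ===== lower bound : every TAR sequence has at least d + 2 steps =====
  have lb : ∀ L, TARSeq G c k S S' L → d + 2 ≤ L.length - 1 := by
    rintro L ⟨hA, hB, hch⟩
    obtain ⟨hle, hpar⟩ := chainbound L hch S S' hA hB
    by_contra hcon
    push_neg at hcon
    have hm : L.length - 1 = d := by omega
    have hL0 : L ≠ [] := by rintro rfl; simp at hA
    have hlen2 : 2 ≤ L.length := by
      have := List.length_pos_iff.mpr hL0
      omega
    obtain ⟨T, L2, hLeq, hh2, hg2, hlen2', hstep, hch2⟩ := front_step hch hA hB hlen2
    obtain ⟨x, hx⟩ := step_structure hstep.2.2.2.2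
    rcases hx with ⟨hxS, hTeq⟩ | ⟨hxS, hTeq⟩
    · by_cases hxS' : x ∈ S'
      · have hsub : T ⊆ S ∪ S' := by
          rw [hTeq]
          exact Finset.insert_subset (Finset.mem_union_right _ hxS') Finset.subset_union_left
        have hTS : T = S := hl.2.2.2 T hsub hstep.2.1 (hTeq ▸ Finset.subset_insert _ _)
        exact hxS (hTS ▸ (hTeq ▸ Finset.mem_insert_self x S))
      · have h2 := (chainbound L2 hch2 T S' hh2 hg2).1
        have hxsd : x ∉ symmDiff S S' := by
          rw [Finset.mem_symmDiff]; tauto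
        have hsdT : (symmDiff T S').card = d + 1 := by
          rw [hTeq, sd_insert_left hxS hxS', Finset.card_insert_of_notMem hxsd]
        omega
    · have hcT := hstep.2.2.2.1
      rw [hTeq, Finset.card_erase_of_mem hxS, hcS] at hcT
      omega
  -- ===== refined lower bound in the no-common-vertex case =====
  have lb4 : (¬ ∃ v ∉ S ∪ S', ColSet G c (insert v S) ∧ ColSet G c (insert v S')) →
      ∀ L, TARSeq G c k S S' L → d + 4 ≤ L.length - 1 := by
    rintro hn L hseq
    obtain ⟨hA, hB, hch⟩ := hseq
    have hlb := lb L ⟨hA, hB, hch⟩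
    obtain ⟨hle, hpar⟩ := chainbound L hch S S' hA hB
    by_contra hcon
    push_neg at hcon
    have hm : L.length - 1 = d + 2 := by omega
    have hL0 : L ≠ [] := by rintro rfl; simp at hA
    have hlen2 : 2 ≤ L.length := by
      have := List.length_pos_iff.mpr hL0
      omega
    obtain ⟨T, L2, hLeq, hh2, hg2, hlen2', hstep, hch2⟩ := front_step hch hA hB hlen2
    obtain ⟨x, hx⟩ := step_structure hstep.2.2.2.2
    rcases hx with ⟨hxS, hTeq⟩ | ⟨hxS, hTeq⟩
    · by_cases hxS' : x ∈ S'
      · have hsub : T ⊆ S ∪ S' := by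
          rw [hTeq]
          exact Finset.insert_subset (Finset.mem_union_right _ hxS') Finset.subset_union_left
        have hTS : T = S := hl.2.2.2 T hsub hstep.2.1 (hTeq ▸ Finset.subset_insert _ _)
        exact hxS (hTS ▸ (hTeq ▸ Finset.mem_insert_self x S))
      · -- x ∉ S ∪ S'; now look from the back
        have hchrev : L2.reverse.Chain' (TARStep G c k) :=
          List.isChain_reverse.mpr (hch2.imp (fun {a b} h => tarStep_symm h))
        have hrevh : L2.reverse.head? = some S' := by rw [List.head?_reverse]; exact hg2
        have hrevg : L2.reverse.getLast? = some T := by rw [List.getLast?_reverse]; exact hh2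
        have hlenrev : 2 ≤ L2.reverse.length := by
          rw [List.length_reverse]
          omega
        obtain ⟨T', L3, hLeq3, hh3, hg3, hlen3, hstep3, hch3⟩ :=
          front_step hchrev hrevh hrevg hlenrev
        obtain ⟨y, hy⟩ := step_structure hstep3.2.2.2.2
        rcases hy with ⟨hyS', hTeq'⟩ | ⟨hyS', hTeq'⟩
        · by_cases hyS : y ∈ S
          · have hsub : T' ⊆ S ∪ S' := by
              rw [hTeq']
              exact Finset.insert_subset (Finset.mem_union_left _ hyS) Finset.subset_union_right
            have hTS' : T' = S' := hl'.2.2.2 T' hsub hstep3.2.1 (hTeq' ▸ Finset.subset_insert _ _)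
            exact hyS' (hTS' ▸ (hTeq' ▸ Finset.mem_insert_self y S'))
          · by_cases hxy : x = y
            · subst hxy
              exact hn ⟨x, by rw [Finset.mem_union]; tauto,
                hTeq ▸ hstep.2.1, hTeq' ▸ hstep3.2.1⟩
            · have h3 := (chainbound L3 hch3 T' T hh3 hg3).1
              have hysd : y ∉ symmDiff S' S := by rw [Finset.mem_symmDiff]; tauto
              have hxsd : x ∉ insert x (symmDiff S' S) → False := fun h => h (Finset.mem_insert_self _ _)
              have hsdTT : (symmDiff T' T).card = d + 2 := by
                rw [hTeq', hTeq, sd_insert_insert hyS' hyS hxS' hxS (Ne.symm hxy)]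
                have h5 : x ∉ symmDiff S' S := by rw [Finset.mem_symmDiff]; tauto
                have h6 : y ∉ insert x (symmDiff S' S) := by
                  rw [Finset.mem_insert]
                  push_neg
                  exact ⟨Ne.symm hxy, hysd⟩
                rw [Finset.card_insert_of_notMem h6, Finset.card_insert_of_notMem h5,
                  symmDiff_comm, ← hd]
              have hL3len : L3.length = L2.length - 1 := by
                rw [hlen3, List.length_reverse]
              omega
        · have hcT := hstep3.2.2.2.1
          rw [hTeq', Finset.card_erase_of_mem hyS', hcS'] at hcT
          omega
    · have hcT := hstep.2.2.2.1
      rw [hTeq, Finset.card_erase_of_mem hxS, hcS] at hcT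
      omega
  -- ===== upper bound construction =====
  have build : ∀ v w : V, v ∉ S ∪ S' → w ∉ S ∪ S' → ColSet G c (insert v S) →
      ColSet G c (insert w S') → ∃ L, TARSeq G c k S S' L ∧
        L.length = (symmDiff (insert v S) (insert w S')).card + 3 := by
    intro v w hv hw hcv hcw
    have hvS : v ∉ S := fun h => hv (Finset.mem_union_left _ h)
    have hvS' : v ∉ S' := fun h => hv (Finset.mem_union_right _ h)
    have hwS : w ∉ S := fun h => hw (Finset.mem_union_left _ h)
    have hwS' : w ∉ S' := fun h => hw (Finset.mem_union_right _ h)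
    set A := insert v S with hA
    set B := insert w S' with hB
    have hcardA : A.card = k + 1 := by rw [hA, Finset.card_insert_of_notMem hvS, hcS]
    have hcardB : B.card = k + 1 := by rw [hB, Finset.card_insert_of_notMem hwS', hcS']
    obtain ⟨Lmid, hhm, hgm, hlenm, hchm⟩ := path_lemma (c := c) (k := k) hlr hrep (symmDiff A B).card A B rfl
      (by omega) (by omega) (fun p => cov_le_of_colorable hrep hcv p)
      (fun p => cov_le_of_colorable hrep hcw p)
    have stepSA : TARStep G c k S A := by
      refine ⟨hS, hcv, hk, by omega, ?_⟩
      rw [hA, sd_insert hvS]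
      exact Finset.card_singleton v
    have stepBS' : TARStep G c k B S' := by
      refine ⟨hcw, hS', by omega, hk', ?_⟩
      rw [hB, symmDiff_comm, sd_insert hwS']
      exact Finset.card_singleton w
    cases Lmid with
    | nil => simp at hhm
    | cons hd tl =>
      have hhd : hd = A := by simpa using hhm
      subst hhd
      refine ⟨S :: ((A :: tl) ++ [S']), ⟨rfl, ?_, ?_⟩, ?_⟩
      · rw [show S :: ((A :: tl) ++ [S']) = (S :: A :: tl) ++ [S'] from rfl,
          List.getLast?_append]
        rfl
      · refine List.isChain_cons.mpr ⟨fun y hy => by simp at hy; subst hy; exact stepSA, ?_⟩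
        rw [List.isChain_append]
        refine ⟨hchm, List.isChain_singleton _, ?_⟩
        intro a ha b hb
        rw [hgm] at ha
        simp at ha hb
        subst ha; subst hb
        exact stepBS'
      · simp at hlenm ⊢
        omega
  -- ===== conclusion =====
  constructor
  · rintro ⟨v, hv, hcv, hcv'⟩
    have hvS : v ∉ S := fun h => hv (Finset.mem_union_left _ h)
    have hvS' : v ∉ S' := fun h => hv (Finset.mem_union_right _ h)
    obtain ⟨L, hseq, hlenL⟩ := build v v hv hv hcv hcv'
    have hsame : (symmDiff (insert v S) (insert v S')).card = d := by
      rw [sd_insert_both hvS hvS', ← hd]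
    apply le_antisymm
    · apply sInf_le
      refine ⟨L, hseq, ?_⟩
      rw [hlenL, hsame]
      push_cast
      ring
    · apply le_sInf
      rintro n ⟨L', hseq', hlen'⟩
      rcases eq_or_ne n ⊤ with rfl | hntop
      · exact le_top
      · lift n to ℕ using hntop
        have hlen'' : L'.length = n + 1 := by exact_mod_cast hlen'
        have hlow := lb L' hseq'
        have : d + 2 ≤ n := by omega
        exact_mod_cast this
  · rintro hn
    -- find extension vertices
    have extS : ∃ v, v ∉ S ∪ S' ∧ ColSet G c (insert v S) := by
      have hmax : ¬ ∀ T ⊆ Finset.univ, ColSet G c T → S ⊆ T → T = S := fun hmax =>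
        hnlG ⟨hcS, hS, Finset.subset_univ S, hmax⟩
      push_neg at hmax
      obtain ⟨T, hTu, hcolT, hST, hTS⟩ := hmax
      obtain ⟨xv, hxT, hxS⟩ := Finset.exists_of_ssubset (lt_of_le_of_ne hST (Ne.symm hTS))
      have hcolI : ColSet G c (insert xv S) :=
        colSet_mono (Finset.insert_subset hxT hST) hcolT
      refine ⟨xv, ?_, hcolI⟩
      rw [Finset.mem_union]
      rintro (h | h)
      · exact hxS h
      · have hsub : insert xv S ⊆ S ∪ S' :=
          Finset.insert_subset (Finset.mem_union_right _ h) Finset.subset_union_left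
        have := hl.2.2.2 _ hsub hcolI (Finset.subset_insert _ _)
        exact hxS (this ▸ Finset.mem_insert_self xv S)
    have extS' : ∃ w, w ∉ S ∪ S' ∧ ColSet G c (insert w S') := by
      have hmax : ¬ ∀ T ⊆ Finset.univ, ColSet G c T → S' ⊆ T → T = S' := fun hmax =>
        hnlG' ⟨hcS', hS', Finset.subset_univ S', hmax⟩
      push_neg at hmax
      obtain ⟨T, hTu, hcolT, hST, hTS⟩ := hmax
      obtain ⟨xv, hxT, hxS'2⟩ := Finset.exists_of_ssubset (lt_of_le_of_ne hST (Ne.symm hTS))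
      have hcolI : ColSet G c (insert xv S') :=
        colSet_mono (Finset.insert_subset hxT hST) hcolT
      refine ⟨xv, ?_, hcolI⟩
      rw [Finset.mem_union]
      rintro (h | h)
      · have hsub : insert xv S' ⊆ S ∪ S' :=
          Finset.insert_subset (Finset.mem_union_left _ h) Finset.subset_union_right
        have := hl'.2.2.2 _ hsub hcolI (Finset.subset_insert _ _)
        exact hxS'2 (this ▸ Finset.mem_insert_self xv S')
      · exact hxS'2 h
    obtain ⟨v, hv, hcv⟩ := extS
    obtain ⟨w, hw, hcw⟩ := extS'
    have hvw : v ≠ w := by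
      rintro rfl
      exact hn ⟨v, hv, hcv, hcw⟩
    have hvS : v ∉ S := fun h => hv (Finset.mem_union_left _ h)
    have hvS' : v ∉ S' := fun h => hv (Finset.mem_union_right _ h)
    have hwS : w ∉ S := fun h => hw (Finset.mem_union_left _ h)
    have hwS' : w ∉ S' := fun h => hw (Finset.mem_union_right _ h)
    obtain ⟨L, hseq, hlenL⟩ := build v w hv hw hcv hcw
    have hsame : (symmDiff (insert v S) (insert w S')).card = d + 2 := by
      rw [sd_insert_insert hvS hvS' hwS hwS' hvw]
      have h5 : w ∉ symmDiff S S' := by rw [Finset.mem_symmDiff]; tauto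
      have h6 : v ∉ insert w (symmDiff S S') := by
        rw [Finset.mem_insert]
        push_neg
        refine ⟨hvw, ?_⟩
        rw [Finset.mem_symmDiff]
        tauto
      rw [Finset.card_insert_of_notMem h6, Finset.card_insert_of_notMem h5, ← hd]
    apply le_antisymm
    · apply sInf_le
      refine ⟨L, hseq, ?_⟩
      rw [hlenL, hsame]
      push_cast
      ring
    · apply le_sInf
      rintro n ⟨L', hseq', hlen'⟩
      rcases eq_or_ne n ⊤ with rfl | hntop
      · exact le_top
      · lift n to ℕ using hntop
        have hlen'' : L'.length = n + 1 := by exact_mod_cast hlen'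
        have hlow := lb4 hn L' hseq'
        have : d + 4 ≤ n := by omega
        exact_mod_cast this
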